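/- Let π and ρ be quadratic functions with ρ(x) − π(x) = c(x−t₀)² for some c > 0 and t₀ ∈ ℝ (so ρ is tangent to π at x = t₀ from above). Let f : ℝ → ℝ be a 3-monotone function equal to π on [t₀, ∞). Then the function g equal to f on (−∞, t₀] and equal to ρ on [t₀, ∞) is 3-monotone. -/

import Mathlib

lemma hump_hasDerivAt (c t₀ : ℝ) (hc : 0 ≤ c) (x : ℝ) :
    HasDerivAt (fun y => c * max (y - t₀) 0 ^ 2) (2 * c * max (x - t₀) 0) x := by
  rcases lt_trichotomy x t₀ with h | h | h
  · have heq : (fun y => c * max (y - t₀) 0 ^ 2) =ᶠ[nhds x] fun _ => (0 : ℝ) := by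
      filter_upwards [Iio_mem_nhds h] with y hy
      have : y - t₀ ≤ 0 := by simp only [Set.mem_Iio] at hy; linarith
      simp [max_eq_right this]
    have h0 : HasDerivAt (fun _ : ℝ => (0 : ℝ)) 0 x := hasDerivAt_const x 0
    have := h0.congr_of_eventuallyEq heq
    simpa [max_eq_right (by linarith : x - t₀ ≤ 0)] using this
  · subst h
    rw [hasDerivAt_iff_tendsto_slope]
    have hb : Filter.Tendsto (fun y => c * |y - x|) (nhdsWithin x {x}ᶜ) (nhds 0) := by
      have : Filter.Tendsto (fun y => c * |y - x|) (nhds x) (nhds (c * |x - x|)) :=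
        Filter.Tendsto.const_mul _ (((continuous_id.sub continuous_const).abs).tendsto x)
      simpa using this.mono_left nhdsWithin_le_nhds
    have hgoal0 : 2 * c * max (x - x) 0 = 0 := by simp
    rw [hgoal0]
    apply squeeze_zero_norm _ hb
    intro y
    rw [Real.norm_eq_abs]
    rcases eq_or_ne y x with rfl | hy
    · simp [slope_def_field]
    · rw [slope_def_field]
      rcases le_or_gt y x with hle | hlt
      · rw [max_eq_right (by linarith : y - x ≤ 0), max_eq_right (by linarith : x - x ≤ 0)]
        have := abs_nonneg (y - x)
        simp only [sub_self, ne_eq, zero_pow, mul_zero, sub_zero]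
        rw [zero_div, abs_zero]
        positivity
      · rw [max_eq_left (by linarith : (0:ℝ) ≤ y - x), max_eq_right (by linarith : x - x ≤ 0)]
        have hne : y - x ≠ 0 := by intro hcon; apply hy; linarith [sub_eq_zero.mp hcon]
        have hq : (c * (y - x) ^ 2 - c * 0 ^ 2) / (y - x) = c * (y - x) := by
          field_simp; ring
        rw [hq, abs_mul, abs_of_nonneg hc]
  · have heq : (fun y => c * max (y - t₀) 0 ^ 2) =ᶠ[nhds x] fun y => c * (y - t₀) ^ 2 := by
      filter_upwards [Ioi_mem_nhds h] with y hy
      have : (0:ℝ) ≤ y - t₀ := by simp only [Set.mem_Ioi] at hy; linarith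
      simp [max_eq_left this]
    have h1 : HasDerivAt (fun y => c * (y - t₀) ^ 2) (c * (2 * (x - t₀))) x := by
      have := ((hasDerivAt_id x).sub_const t₀).pow 2
      simpa using this.const_mul c
    have h2 := h1.congr_of_eventuallyEq heq
    rw [max_eq_left (by linarith : (0:ℝ) ≤ x - t₀)]
    rw [show 2 * c * (x - t₀) = c * (2 * (x - t₀)) by ring]
    exact h2

/-- Gluing a 3-monotone function to a tangent parabola from above preserves
3-monotonicity. -/
theorem glue_tangent_parabola_threeMonotone
    (π ρ : ℝ → ℝ) (c t₀ : ℝ) (hc : 0 < c)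
    (hπ : ∃ a b d : ℝ, ∀ x, π x = a * x ^ 2 + b * x + d)
    (hρ : ∀ x, ρ x = π x + c * (x - t₀) ^ 2)
    (f : ℝ → ℝ) (hfdiff : Differentiable ℝ f)
    (hfconv : ConvexOn ℝ Set.univ (deriv f))
    (hfπ : ∀ x ∈ Set.Ici t₀, f x = π x) :
    Differentiable ℝ (fun x => if x ≤ t₀ then f x else ρ x) ∧
    ConvexOn ℝ Set.univ (deriv (fun x => if x ≤ t₀ then f x else ρ x)) := by
  set h : ℝ → ℝ := fun y => c * max (y - t₀) 0 ^ 2 with hh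
  have hg : (fun x => if x ≤ t₀ then f x else ρ x) = fun x => f x + h x := by
    funext x
    by_cases hx : x ≤ t₀
    · simp [hx, hh, max_eq_right (by linarith : x - t₀ ≤ 0)]
    · push_neg at hx
      simp only [hx.not_ge, if_false, hh]
      rw [hρ x, hfπ x (le_of_lt hx), max_eq_left (by linarith : (0:ℝ) ≤ x - t₀)]
  have hgd : ∀ x, HasDerivAt (fun x => f x + h x)
      (deriv f x + 2 * c * max (x - t₀) 0) x := fun x =>
    (hfdiff x).hasDerivAt.add (hump_hasDerivAt c t₀ hc.le x)
  rw [hg]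
  constructor
  · exact fun x => (hgd x).differentiableAt
  · have hderiv : deriv (fun x => f x + h x)
        = fun x => deriv f x + 2 * c * max (x - t₀) 0 := by
      funext x; exact (hgd x).deriv
    rw [hderiv]
    have haff : ConvexOn ℝ Set.univ (fun x : ℝ => x - t₀) :=
      (convexOn_id convex_univ).sub (concaveOn_const t₀ convex_univ)
    have hmax : ConvexOn ℝ Set.univ (fun x : ℝ => max (x - t₀) 0) :=
      haff.sup (convexOn_const 0 convex_univ)
    have hsm : ConvexOn ℝ Set.univ (fun x : ℝ => 2 * c * max (x - t₀) 0) := by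
      have := hmax.smul (by positivity : (0:ℝ) ≤ 2 * c)
      simpa [smul_eq_mul] using this
    exact hfconv.add hsm
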